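/- arXiv:2512.11601 — 3 statements merged into one kernel-verified Lean document; each statement's English description precedes it below -/
import Mathlib

section
/- For every ℓ ≥ 1, the ranges of the sequences (a_n) and (b_n) defined by the mex recursion form a partition of the set of natural numbers strictly greater than ℓ: every integer m > ℓ equals exactly one of a_n or b_n for exactly one index n, and the two ranges are disjoint. -/
/-- The minimum excluded value of a set of natural numbers. -/
noncomputable def mex (S : Set ℕ) : ℕ := sInf {m : ℕ | m ∉ S}

/-- `MexSeq ℓ a b` says that `a`, `b` are the sequences defined by
    `a 0 = ℓ+1`, `b 0 = 2ℓ+2`, and for `n ≥ 1`: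
    `a n = mex({a i, b i : i < n} ∪ {0,…,ℓ})`, `b n = a n + n + ℓ + 1`. -/
def MexSeq (ℓ : ℕ) (a b : ℕ → ℕ) : Prop :=
  a 0 = ℓ + 1 ∧ b 0 = 2 * ℓ + 2 ∧
  (∀ n : ℕ, 1 ≤ n →
    a n = mex ({m : ℕ | ∃ i < n, m = a i ∨ m = b i} ∪ {m : ℕ | m ≤ ℓ})) ∧
  (∀ n : ℕ, 1 ≤ n → b n = a n + n + ℓ + 1)

lemma lt_mex_mem {S : Set ℕ} {k : ℕ} (h : k < mex S) : k ∈ S := by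
  by_contra hk
  exact absurd (Nat.sInf_le hk) (not_le.mpr h)

lemma mex_not_mem {S : Set ℕ} (h : ∃ m, m ∉ S) : mex S ∉ S :=
  Nat.sInf_mem h

theorem mexSeq_partition (ℓ : ℕ) (hℓ : 1 ≤ ℓ) (a b : ℕ → ℕ)
    (hab : MexSeq ℓ a b) :
    (∀ m : ℕ, ℓ < m →
      ((∃! n : ℕ, a n = m) ∧ ¬ ∃ n : ℕ, b n = m) ∨
      ((∃! n : ℕ, b n = m) ∧ ¬ ∃ n : ℕ, a n = m)) ∧
    Disjoint (Set.range a) (Set.range b) := by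
  obtain ⟨ha0, hb0, hA', hB'⟩ := hab
  set S : ℕ → Set ℕ :=
    fun n => {m : ℕ | ∃ i < n, m = a i ∨ m = b i} ∪ {m : ℕ | m ≤ ℓ} with hSdef
  -- the complement of each S n is nonempty
  have hne : ∀ n, ∃ m, m ∉ S n := by
    intro n
    refine ⟨(∑ i ∈ Finset.range n, (a i + b i)) + ℓ + 1, ?_⟩
    rintro (⟨i, hi, h | h⟩ | h)
    · have hle : a i + b i ≤ ∑ i ∈ Finset.range n, (a i + b i) :=
        Finset.single_le_sum (f := fun i => a i + b i) (fun _ _ => Nat.zero_le _) (Finset.mem_range.mpr hi)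
      omega
    · have hle : a i + b i ≤ ∑ i ∈ Finset.range n, (a i + b i) :=
        Finset.single_le_sum (f := fun i => a i + b i) (fun _ _ => Nat.zero_le _) (Finset.mem_range.mpr hi)
      omega
    · simp only [Set.mem_setOf_eq] at h
      omega
  -- a n = mex (S n) for all n
  have hA : ∀ n, a n = mex (S n) := by
    intro n
    cases n with
    | zero =>
      have hS0 : S 0 = {m : ℕ | m ≤ ℓ} := by
        ext m
        simp [hSdef]
      rw [ha0, hS0]
      have h1 : mex {m : ℕ | m ≤ ℓ} ∈ {m : ℕ | m ∉ {m : ℕ | m ≤ ℓ}} :=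
        Nat.sInf_mem ⟨ℓ + 1, by simp⟩
      simp only [Set.mem_setOf_eq, not_le] at h1
      have h2 : mex {m : ℕ | m ≤ ℓ} ≤ ℓ + 1 := Nat.sInf_le (by simp)
      omega
    | succ n => exact hA' (n + 1) (Nat.succ_le_succ (Nat.zero_le n))
  have hB : ∀ n, b n = a n + n + ℓ + 1 := by
    intro n
    cases n with
    | zero => omega
    | succ n => exact hB' (n + 1) (Nat.succ_le_succ (Nat.zero_le n))
  have hanotS : ∀ n, a n ∉ S n := by
    intro n
    rw [hA n]
    exact mex_not_mem (hne n)
  have hmemlt : ∀ n k, k < a n → k ∈ S n := by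
    intro n k hk
    rw [hA n] at hk
    exact lt_mex_mem hk
  have haℓ : ∀ n, ℓ < a n := by
    intro n
    by_contra h
    push_neg at h
    exact hanotS n (Or.inr h)
  have hstep : ∀ n, a n < a (n + 1) := by
    intro n
    by_contra h
    push_neg at h
    rcases lt_or_eq_of_le h with h' | h'
    · have : a (n + 1) ∈ S n := hmemlt n _ h'
      apply hanotS (n + 1)
      rcases this with ⟨i, hi, hh⟩ | hh
      · exact Or.inl ⟨i, Nat.lt_succ_of_lt hi, hh⟩
      · exact Or.inr hh
    · exact hanotS (n + 1) (Or.inl ⟨n, Nat.lt_succ_self n, Or.inl h'⟩)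
  have hamono : StrictMono a := strictMono_nat_of_lt_succ hstep
  have hbmono : StrictMono b := by
    intro m n hmn
    have := hamono hmn
    rw [hB m, hB n]
    omega
  have halow : ∀ n, ℓ + 1 + n ≤ a n := by
    intro n
    induction n with
    | zero => omega
    | succ n ih => have := hstep n; omega
  -- disjointness of values
  have hdisj : ∀ m n, a m ≠ b n := by
    intro m n h
    rcases lt_or_ge n m with hn | hn
    · exact hanotS m (h ▸ Or.inl ⟨n, hn, Or.inr rfl⟩)
    · have h1 : a m ≤ a n := hamono.le_iff_le.mpr hn
      have h2 := hB n
      omega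
  -- completeness
  have complete : ∀ m, ℓ < m → ∃ i, m = a i ∨ m = b i := by
    intro m hm
    have h1 : m < a m := lt_of_lt_of_le (by omega) (halow m)
    rcases hmemlt m m h1 with ⟨i, _, h⟩ | h
    · exact ⟨i, h⟩
    · simp only [Set.mem_setOf_eq] at h
      omega
  constructor
  · intro m hm
    obtain ⟨i, hi | hi⟩ := complete m hm
    · left
      constructor
      · exact ⟨i, hi.symm, fun y hy => hamono.injective (by rw [hy, hi])⟩
      · rintro ⟨n, hn⟩
        exact hdisj i n (hi.symm.trans hn.symm)
    · right
      constructor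
      · exact ⟨i, hi.symm, fun y hy => hbmono.injective (by rw [hy, hi])⟩
      · rintro ⟨n, hn⟩
        exact hdisj n i (hn.trans hi)
  · rw [Set.disjoint_left]
    rintro x ⟨m, rfl⟩ ⟨n, hn⟩
    exact hdisj m n hn.symm
end

section
/- The set R₂ := {(0,0)} ∪ {(n, 2n+1), (2n+1, n) : n ≥ 0} ∪ {(2⌊nφ⌋+2, 2⌊nφ²⌋+2), (2⌊nφ²⌋+2, 2⌊nφ⌋+2) : n ≥ 0} is 'blocking-absorbing' for one blocked option: for every (p,q) ∈ ℕ² not in R₂, there exist at least two distinct Wythoff options of (p,q) belonging to R₂. -/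
noncomputable def phi : ℝ := (1 + Real.sqrt 5) / 2

/-- `(r,s)` is a Wythoff option of `(p,q)`. -/
def WOpt (p q : ℕ × ℕ) : Prop :=
  (q.1 = p.1 ∧ q.2 < p.2) ∨ (q.1 < p.1 ∧ q.2 = p.2) ∨
  (q.1 < p.1 ∧ q.2 < p.2 ∧ p.1 - q.1 = p.2 - q.2)

/-- The claimed set of P-positions of the blocking game `W²`. -/
noncomputable def R2 : Set (ℕ × ℕ) :=
  {(0, 0)} ∪
  {p : ℕ × ℕ | ∃ n : ℕ, p = (n, 2 * n + 1) ∨ p = (2 * n + 1, n)} ∪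
  {p : ℕ × ℕ | ∃ n : ℕ,
    p = (2 * ⌊(n : ℝ) * phi⌋₊ + 2, 2 * ⌊(n : ℝ) * phi ^ 2⌋₊ + 2) ∨
    p = (2 * ⌊(n : ℝ) * phi ^ 2⌋₊ + 2, 2 * ⌊(n : ℝ) * phi⌋₊ + 2)}

lemma sqrt5_sq : Real.sqrt 5 ^ 2 = 5 := Real.sq_sqrt (by norm_num)
lemma sqrt5_gt : (2:ℝ) < Real.sqrt 5 := by nlinarith [sqrt5_sq, Real.sqrt_nonneg 5]
lemma phi_gt : (1:ℝ) < phi := by unfold phi; linarith [sqrt5_gt]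
lemma phi_pos : (0:ℝ) < phi := by linarith [phi_gt]
lemma phi_sq : phi ^ 2 = phi + 1 := by unfold phi; linear_combination (1/4) * sqrt5_sq

lemma phi_irr : Irrational phi := by
  have h5 : Irrational (Real.sqrt 5) := by
    simpa using (by norm_num : Nat.Prime 5).irrational_sqrt
  have h1 : Irrational ((1:ℚ) + Real.sqrt 5) := h5.ratCast_add 1
  have h2 : Irrational (((1:ℚ) + Real.sqrt 5) / (2:ℚ)) := h1.div_ratCast (by norm_num)
  unfold phi
  convert h2 using 2
  all_goals norm_num

lemma phi_conj : Real.HolderConjugate phi (phi^2) := by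
  rw [Real.holderConjugate_iff]
  constructor
  · exact phi_gt
  · have h0 : phi ≠ 0 := ne_of_gt phi_pos
    field_simp
    linear_combination (-1) * phi_sq

/-- `A n = ⌊n φ⌋₊`. -/
noncomputable def A (n : ℕ) : ℕ := ⌊(n : ℝ) * phi⌋₊

lemma B_eq (n : ℕ) : ⌊(n : ℝ) * phi ^ 2⌋₊ = A n + n := by
  have h : (n : ℝ) * phi ^ 2 = (n : ℝ) * phi + n := by rw [phi_sq]; ring
  rw [h, Nat.floor_add_natCast (mul_nonneg (Nat.cast_nonneg _) phi_pos.le), A]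

lemma A_strictMono : StrictMono A := by
  apply strictMono_nat_of_lt_succ
  intro n
  have h1 : (n : ℝ) * phi + 1 ≤ ((n+1 : ℕ) : ℝ) * phi := by
    push_cast; nlinarith [phi_gt]
  have h2 : ⌊(n : ℝ) * phi + 1⌋₊ ≤ ⌊((n+1 : ℕ) : ℝ) * phi⌋₊ := Nat.floor_le_floor h1
  rw [Nat.floor_add_one (mul_nonneg (Nat.cast_nonneg _) phi_pos.le)] at h2
  exact lt_of_lt_of_le (Nat.lt_succ_self _) h2

lemma le_A (n : ℕ) : n ≤ A n := Nat.le_floor (by nlinarith [phi_gt, Nat.cast_nonneg (α := ℝ) n])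

lemma A_zero : A 0 = 0 := by simp [A]

lemma cover (m : ℕ) : ∃ k : ℕ, A k = m ∨ A k + k = m := by
  rcases Nat.eq_zero_or_pos m with rfl | hm
  · exact ⟨0, Or.inl A_zero⟩
  · have hsd := phi_irr.beattySeq_symmDiff_beattySeq_pos phi_conj
    have hmem : (m : ℤ) ∈ {n : ℤ | 0 < n} := by simpa using hm
    rw [← hsd] at hmem
    have hun : ((m:ℤ) ∈ {beattySeq phi k | k > 0}) ∨ ((m:ℤ) ∈ {beattySeq (phi^2) k | k > 0}) := by
      rcases Set.mem_symmDiff.mp hmem with ⟨h, -⟩ | ⟨h, -⟩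
      · exact Or.inl h
      · exact Or.inr h
    rcases hun with ⟨k, hk, hfl⟩ | ⟨k, hk, hfl⟩
    · refine ⟨k.toNat, Or.inl ?_⟩
      have hc : ((k.toNat : ℕ) : ℝ) = (k : ℝ) := by
        rw [show ((k.toNat : ℕ) : ℝ) = ((k.toNat : ℤ) : ℝ) by push_cast; ring,
          Int.toNat_of_nonneg hk.le]
      have h2 : ⌊(k.toNat : ℝ) * phi⌋ = (m : ℤ) := by rw [hc]; exact hfl
      have h3 := congrArg Int.toNat h2
      rwa [Int.floor_toNat, Int.toNat_natCast] at h3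
    · refine ⟨k.toNat, Or.inr ?_⟩
      have hc : ((k.toNat : ℕ) : ℝ) = (k : ℝ) := by
        rw [show ((k.toNat : ℕ) : ℝ) = ((k.toNat : ℤ) : ℝ) by push_cast; ring,
          Int.toNat_of_nonneg hk.le]
      have h2 : ⌊(k.toNat : ℝ) * phi ^ 2⌋ = (m : ℤ) := by rw [hc]; exact hfl
      have h3 := congrArg Int.toNat h2
      rw [Int.floor_toNat, Int.toNat_natCast] at h3
      rw [← B_eq]; exact h3

/-! ### Membership lemmas -/

lemma mem0 : ((0,0) : ℕ × ℕ) ∈ R2 := Or.inl (Or.inl rfl)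

lemma mem_line1 (n : ℕ) : ((n, 2*n+1) : ℕ × ℕ) ∈ R2 := Or.inl (Or.inr ⟨n, Or.inl rfl⟩)

lemma mem_line2 (n : ℕ) : ((2*n+1, n) : ℕ × ℕ) ∈ R2 := Or.inl (Or.inr ⟨n, Or.inr rfl⟩)

lemma mem_even (n : ℕ) : ((2*A n+2, 2*(A n + n)+2) : ℕ × ℕ) ∈ R2 :=
  Or.inr ⟨n, Or.inl (by rw [B_eq]; rfl)⟩

lemma mem_even' (n : ℕ) : ((2*(A n + n)+2, 2*A n+2) : ℕ × ℕ) ∈ R2 :=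
  Or.inr ⟨n, Or.inr (by rw [B_eq]; rfl)⟩

lemma R2_swap {a b : ℕ} (h : (a,b) ∈ R2) : (b,a) ∈ R2 := by
  rcases h with (h | ⟨n, h | h⟩) | ⟨n, h | h⟩
  · rw [Set.mem_singleton_iff, Prod.mk.injEq] at h
    exact h.1 ▸ h.2 ▸ mem0
  · rw [Prod.mk.injEq] at h; exact h.1 ▸ h.2 ▸ mem_line2 n
  · rw [Prod.mk.injEq] at h; exact h.1 ▸ h.2 ▸ mem_line1 n
  · rw [Prod.mk.injEq] at h
    exact h.1 ▸ h.2 ▸ (Or.inr ⟨n, Or.inr rfl⟩ : (_,_) ∈ R2)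
  · rw [Prod.mk.injEq] at h
    exact h.1 ▸ h.2 ▸ (Or.inr ⟨n, Or.inl rfl⟩ : (_,_) ∈ R2)

/-! ### Option helpers -/

lemma wv {p q s : ℕ} (h : s < q) : WOpt (p,q) (p,s) := Or.inl ⟨rfl, h⟩
lemma wh {p q r : ℕ} (h : r < p) : WOpt (p,q) (r,q) := Or.inr (Or.inl ⟨h, rfl⟩)
lemma wd {p q r s : ℕ} (h1 : r < p) (h2 : s < q) (h3 : p - r = q - s) :
    WOpt (p,q) (r,s) := Or.inr (Or.inr ⟨h1, h2, h3⟩)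

lemma WOpt_swap {p q r s : ℕ} (h : WOpt (p,q) (r,s)) : WOpt (q,p) (s,r) := by
  rcases h with ⟨h1, h2⟩ | ⟨h1, h2⟩ | ⟨h1, h2, h3⟩
  · exact Or.inr (Or.inl ⟨h2, h1⟩)
  · exact Or.inl ⟨h2, h1⟩
  · exact Or.inr (Or.inr ⟨h2, h1, h3.symm⟩)

/-! ### Key lemma -/

lemma key (p q : ℕ) (hle : p ≤ q) (h : (p,q) ∉ R2) :
    ∃ q₁ ∈ R2, ∃ q₂ ∈ R2, q₁ ≠ q₂ ∧ WOpt (p,q) q₁ ∧ WOpt (p,q) q₂ := by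
  by_cases hp0 : p = 0
  · subst hp0
    have hq0 : q ≠ 0 := fun e => h (e ▸ mem0)
    have hq1 : q ≠ 1 := fun e => h (e ▸ mem_line1 0)
    exact ⟨(0,0), mem0, (0,1), mem_line1 0, by decide, wv (by omega), wv (by omega)⟩
  have hp1 : 1 ≤ p := Nat.pos_of_ne_zero hp0
  rcases eq_or_lt_of_le hle with heq | hlt
  · -- diagonal case p = q
    subst heq
    by_cases hp1' : p = 1
    · subst hp1'
      exact ⟨(0,0), mem0, (0,1), mem_line1 0, by decide,
        wd (by omega) (by omega) rfl, wh (by omega)⟩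
    have hp2 : p ≠ 2 := by
      intro e; subst e
      exact h (by simpa [A_zero] using mem_even 0)
    have hp3 : 3 ≤ p := by omega
    refine ⟨(0,0), mem0, (2,2), by simpa [A_zero] using mem_even 0, by decide,
      wd (by omega) (by omega) rfl, wd (by omega) (by omega) rfl⟩
  · -- p < q
    have hq1 : q ≠ 2*p+1 := fun e => h (e ▸ mem_line1 p)
    by_cases hbig : 2*p+1 < q
    · -- tall case
      refine ⟨(p, 2*p+1), mem_line1 p, ?_⟩
      rcases Nat.even_or_odd p with ⟨m, hm⟩ | ⟨n, hn⟩
      · -- p even, p = 2m = 2(m-1)+2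
        have hm1 : 1 ≤ m := by omega
        obtain ⟨k, hk | hk⟩ := cover (m - 1)
        · -- A k = m - 1, partner above
          refine ⟨(p, 2*(A k + k)+2), ?_, ?_, wv hbig, wv ?_⟩
          · have : p = 2*A k + 2 := by omega
            rw [this]; exact mem_even k
          · have hka := le_A k
            intro e; rw [Prod.mk.injEq] at e; omega
          · have hka := le_A k
            omega
        · -- A k + k = m - 1, partner below
          refine ⟨(p, 2*A k+2), ?_, ?_, wv hbig, wv ?_⟩
          · have : p = 2*(A k + k) + 2 := by omega
            rw [this]; exact mem_even' k
          · intro e; rw [Prod.mk.injEq] at e; omega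
          · omega
      · -- p odd, p = 2n+1
        refine ⟨(p, n), ?_, ?_, wv hbig, wv (by omega)⟩
        · have : p = 2*n+1 := by omega
          rw [this]; exact mem_line2 n
        · intro e; rw [Prod.mk.injEq] at e; omega
    · -- squat case: p < q ≤ 2p
      have hq2p : q ≤ 2*p := by omega
      have hd1 : 1 ≤ q - p := by omega
      have hdp : q - p ≤ p := by omega
      refine ⟨(q - p - 1, 2*(q - p - 1)+1), mem_line1 _,
        ?_⟩
      have hw1 : WOpt (p,q) (q - p - 1, 2*(q - p - 1)+1) :=
        wd (by omega) (by omega) (by omega)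
      rcases Nat.even_or_odd q with ⟨v, hv⟩ | ⟨n, hn⟩
      · -- q even
        rcases Nat.even_or_odd p with ⟨u, hu⟩ | ⟨w, hw⟩
        · -- p even : p = 2u, q = 2v;  u' = u-1, v' = v-1
          have hu1 : 1 ≤ u := by omega
          have hv1 : u < v := by omega
          obtain ⟨k, hk | hk⟩ := cover (u - 1)
          · -- u - 1 = A k
            rcases lt_trichotomy (u - 1 + k) (v - 1) with hlt' | heq' | hgt'
            · refine ⟨(p, 2*(A k + k)+2), ?_, ?_, hw1, wv (by omega)⟩
              · have : p = 2*A k + 2 := by omega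
                rw [this]; exact mem_even k
              · intro e; rw [Prod.mk.injEq] at e; omega
            · exfalso
              apply h
              have h1 : p = 2*A k + 2 := by omega
              have h2 : q = 2*(A k + k) + 2 := by omega
              rw [h1, h2]; exact mem_even k
            · -- v - 1 < u - 1 + k ; use n' = v - u < k
              set n' := v - u with hn'
              have hn'k : n' < k := by omega
              have hAn' : A n' < A k := A_strictMono hn'k
              refine ⟨(2*A n'+2, 2*(A n' + n')+2), mem_even n', ?_,
                hw1, wd (by omega) (by omega) (by omega)⟩
              intro e; rw [Prod.mk.injEq] at e; omega
          · -- u - 1 = A k + k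
            refine ⟨(p, 2*A k+2), ?_, ?_, hw1, wv (by omega)⟩
            · have : p = 2*(A k + k) + 2 := by omega
              rw [this]; exact mem_even' k
            · intro e; rw [Prod.mk.injEq] at e; omega
        · -- p odd = 2w+1
          refine ⟨(p, w), ?_, ?_, hw1, wv (by omega)⟩
          · have : p = 2*w+1 := by omega
            rw [this]; exact mem_line2 w
          · intro e; rw [Prod.mk.injEq] at e; omega
      · -- q odd = 2n+1
        refine ⟨(n, q), ?_, ?_, hw1, wh (by omega)⟩
        · have : q = 2*n+1 := by omega
          rw [this]; exact mem_line1 n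
        · intro e; rw [Prod.mk.injEq] at e; omega

/-- Blocking-absorption of `R₂`: every position outside `R₂` has at least two
    distinct Wythoff options in `R₂`. -/
theorem R2_blocking_absorbing :
    ∀ p : ℕ × ℕ, p ∉ R2 →
      ∃ q₁ ∈ R2, ∃ q₂ ∈ R2, q₁ ≠ q₂ ∧ WOpt p q₁ ∧ WOpt p q₂ := by
  rintro ⟨p, q⟩ h
  rcases le_total p q with hle | hle
  · exact key p q hle h
  · have h' : (q, p) ∉ R2 := fun hm => h (R2_swap hm)
    obtain ⟨⟨r₁, s₁⟩, m₁, ⟨r₂, s₂⟩, m₂, hne, w₁, w₂⟩ := key q p hle h'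
    refine ⟨(s₁, r₁), R2_swap m₁, (s₂, r₂), R2_swap m₂, ?_, WOpt_swap w₁, WOpt_swap w₂⟩
    intro e; rw [Prod.mk.injEq] at e
    exact hne (by rw [Prod.mk.injEq]; exact ⟨e.2, e.1⟩)
end

section
/- Let ℓ ≥ 1 and let (a_n, b_n) be the mex-defined sequences. Let P := {(x,y) : x+y ≤ ℓ} ∪ {(a_n,b_n) : n ≥ 0} ∪ {(b_n,a_n) : n ≥ 0}. Then P is stable for the Wythoff moves: there is no Wythoff move between two distinct elements of P with the source having coordinate sum > ℓ. -/
/-- A Wythoff move from `p` to `q` in `ℕ × ℕ`: remove a positive number of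
    tokens from one pile, or the same positive number from both piles. -/
def WythoffMove (p q : ℕ × ℕ) : Prop :=
  (q.1 = p.1 ∧ q.2 < p.2) ∨ (q.1 < p.1 ∧ q.2 = p.2) ∨
  (q.1 < p.1 ∧ q.2 < p.2 ∧ p.1 - q.1 = p.2 - q.2)

namespace MexAux

/-- The excluded set used at stage `n`. -/
def S (a b : ℕ → ℕ) (ℓ n : ℕ) : Set ℕ :=
  {m : ℕ | ∃ i < n, m = a i ∨ m = b i} ∪ {m : ℕ | m ≤ ℓ}

lemma S_finite (a b : ℕ → ℕ) (ℓ n : ℕ) : (S a b ℓ n).Finite := by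
  have h : S a b ℓ n = a '' Set.Iio n ∪ b '' Set.Iio n ∪ Set.Iic ℓ := by
    ext m
    simp only [S, Set.mem_union, Set.mem_setOf_eq, Set.mem_image, Set.mem_Iio, Set.mem_Iic]
    constructor
    · rintro (⟨i, hi, h | h⟩ | h)
      · exact Or.inl (Or.inl ⟨i, hi, h.symm⟩)
      · exact Or.inl (Or.inr ⟨i, hi, h.symm⟩)
      · exact Or.inr h
    · rintro ((⟨i, hi, h⟩ | ⟨i, hi, h⟩) | h)
      · exact Or.inl ⟨i, hi, Or.inl h.symm⟩
      · exact Or.inl ⟨i, hi, Or.inr h.symm⟩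
      · exact Or.inr h
  rw [h]
  exact (((Set.finite_Iio n).image a).union ((Set.finite_Iio n).image b)).union
    (Set.finite_Iic ℓ)

lemma S_mono (a b : ℕ → ℕ) (ℓ : ℕ) {n n' : ℕ} (h : n ≤ n') :
    S a b ℓ n ⊆ S a b ℓ n' := by
  rintro m (⟨i, hi, hm⟩ | hm)
  · exact Or.inl ⟨i, lt_of_lt_of_le hi h, hm⟩
  · exact Or.inr hm

lemma mex_not_mem {T : Set ℕ} (h : T.Finite) : mex T ∉ T :=
  Nat.sInf_mem (Set.Infinite.nonempty h.infinite_compl)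

lemma mex_mono {T T' : Set ℕ} (h : T ⊆ T') (h' : T'.Finite) : mex T ≤ mex T' :=
  Nat.sInf_le (fun hm => (mex_not_mem h') (h hm))

variable {ℓ : ℕ} {a b : ℕ → ℕ}

lemma b_eq (hab : MexSeq ℓ a b) (n : ℕ) : b n = a n + n + ℓ + 1 := by
  rcases Nat.eq_zero_or_pos n with h | h
  · subst h; rw [hab.2.1, hab.1]; ring
  · exact hab.2.2.2 n h

lemma a_eq (hab : MexSeq ℓ a b) {n : ℕ} (hn : 1 ≤ n) : a n = mex (S a b ℓ n) :=
  hab.2.2.1 n hn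

lemma a_not_mem (hab : MexSeq ℓ a b) {n : ℕ} (hn : 1 ≤ n) : a n ∉ S a b ℓ n := by
  rw [a_eq hab hn]; exact mex_not_mem (S_finite a b ℓ n)

lemma a_gt (hab : MexSeq ℓ a b) (n : ℕ) : ℓ < a n := by
  rcases Nat.eq_zero_or_pos n with h | h
  · subst h; rw [hab.1]; omega
  · by_contra hle
    exact a_not_mem hab h (Or.inr (show a n ≤ ℓ by omega))

lemma a_lt (hab : MexSeq ℓ a b) {m n : ℕ} (h : m < n) : a m < a n := by
  have hn : 1 ≤ n := by omega
  have hmem : a m ∈ S a b ℓ n := Or.inl ⟨m, h, Or.inl rfl⟩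
  have hne : a n ≠ a m := fun he => a_not_mem hab hn (he ▸ hmem)
  rcases Nat.eq_zero_or_pos m with hm | hm
  · subst hm
    have h0 := hab.1
    rw [h0] at hne
    rw [h0]
    have := a_gt hab n
    omega
  · have hle : a m ≤ a n := by
      rw [a_eq hab hm, a_eq hab hn]
      exact mex_mono (S_mono a b ℓ (le_of_lt h)) (S_finite a b ℓ n)
    omega

lemma a_le (hab : MexSeq ℓ a b) {m n : ℕ} (h : m ≤ n) : a m ≤ a n := by
  rcases eq_or_lt_of_le h with h | h
  · exact le_of_eq (by rw [h])
  · exact le_of_lt (a_lt hab h)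

lemma a_ne_b (hab : MexSeq ℓ a b) (m n : ℕ) : a n ≠ b m := by
  rcases lt_or_ge m n with h | h
  · intro he
    exact a_not_mem hab (by omega) (Or.inl ⟨m, h, Or.inr he⟩)
  · have h1 := b_eq hab m
    have h2 := a_le hab h
    omega

/-- The key stability lemma for `p = (a n, b n)`. -/
lemma key (hab : MexSeq ℓ a b) (n : ℕ) (q : ℕ × ℕ)
    (hq : q.1 + q.2 ≤ ℓ ∨ (∃ m, q = (a m, b m)) ∨ (∃ m, q = (b m, a m))) :
    ¬ WythoffMove (a n, b n) q := by
  intro hw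
  have hbn := b_eq hab n
  have han := a_gt hab n
  rcases hq with hq | ⟨m, rfl⟩ | ⟨m, rfl⟩
  · rcases hw with ⟨h1, h2⟩ | ⟨h1, h2⟩ | ⟨h1, h2, h3⟩ <;> simp_all <;> omega
  · have hbm := b_eq hab m
    rcases hw with ⟨h1, h2⟩ | ⟨h1, h2⟩ | ⟨h1, h2, h3⟩ <;>
      simp only at h1 h2 ⊢
    · have hmn : m = n := by
        rcases lt_trichotomy m n with h | h | h
        · exact absurd h1 (ne_of_lt (a_lt hab h))
        · exact h
        · exact absurd h1.symm (ne_of_lt (a_lt hab h))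
      subst hmn; omega
    · have hmn : m = n := by
        rcases lt_trichotomy m n with h | h | h
        · have := a_lt hab h; omega
        · exact h
        · have := a_lt hab h; omega
      subst hmn; omega
    · simp only at h3
      have hmn : m = n := by omega
      subst hmn; omega
  · have hbm := b_eq hab m
    rcases hw with ⟨h1, h2⟩ | ⟨h1, h2⟩ | ⟨h1, h2, h3⟩ <;> simp only at h1 h2 ⊢
    · exact a_ne_b hab m n h1.symm
    · exact a_ne_b hab n m h2
    · simp only at h3
      omega

end MexAux

theorem mexSeq_ppos_stable (ℓ : ℕ) (hℓ : 1 ≤ ℓ) (a b : ℕ → ℕ)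
    (hab : MexSeq ℓ a b)
    (P : Set (ℕ × ℕ))
    (hP : P = {p : ℕ × ℕ | p.1 + p.2 ≤ ℓ} ∪
          {p : ℕ × ℕ | ∃ n : ℕ, p = (a n, b n)} ∪
          {p : ℕ × ℕ | ∃ n : ℕ, p = (b n, a n)}) :
    ∀ p ∈ P, ℓ < p.1 + p.2 → ∀ q ∈ P, ¬ WythoffMove p q := by
  subst hP
  intro p hp hsum q hq hw
  have hq' : q.1 + q.2 ≤ ℓ ∨ (∃ m, q = (a m, b m)) ∨ (∃ m, q = (b m, a m)) := by
    rcases hq with (hq | hq) | hq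
    · exact Or.inl hq
    · exact Or.inr (Or.inl hq)
    · exact Or.inr (Or.inr hq)
  rcases hp with (hp | ⟨n, rfl⟩) | ⟨n, rfl⟩
  · exact absurd (show p.1 + p.2 ≤ ℓ from hp) (by omega)
  · exact MexAux.key hab n q hq' hw
  · -- swap
    have hw' : WythoffMove (a n, b n) (q.2, q.1) := by
      rcases hw with ⟨h1, h2⟩ | ⟨h1, h2⟩ | ⟨h1, h2, h3⟩
      · exact Or.inr (Or.inl ⟨h2, h1⟩)
      · exact Or.inl ⟨h2, h1⟩
      · exact Or.inr (Or.inr ⟨h2, h1, h3.symm⟩)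
    have hq'' : (q.2, q.1).1 + (q.2, q.1).2 ≤ ℓ ∨
        (∃ m, (q.2, q.1) = (a m, b m)) ∨ (∃ m, (q.2, q.1) = (b m, a m)) := by
      rcases hq' with hq | ⟨m, rfl⟩ | ⟨m, rfl⟩
      · exact Or.inl (by simpa [Nat.add_comm] using hq)
      · exact Or.inr (Or.inr ⟨m, rfl⟩)
      · exact Or.inr (Or.inl ⟨m, rfl⟩)
    exact MexAux.key hab n (q.2, q.1) hq'' hw'
end
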